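/- Let Φ be a real n×m matrix whose columns φ_1,…,φ_m each have unit Euclidean norm, let x ∈ ℝ^m have support S, let ε ∈ ℝⁿ, and let y = Φx + ε. Let A ⊆ {1,…,m} satisfy S ⊊ A, and suppose the submatrix Φ_A of columns indexed by A has full column rank. If (σ_min(Φ_A) / √(2(2 − σ_min(Φ_A)²))) · min_{i∈S} |x_i| > ‖ε‖₂, then min_{i ∈ A∖S} ‖r_{A∖{i}}‖₂ < min_{i ∈ S} ‖r_{A∖{i}}‖₂; in particular every minimizer of ‖r_{A∖{i}}‖₂ over i ∈ A lies in A∖S, so Backward Regression at active set A deletes only irrelevant features. -/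

import Mathlib

/-- The least-squares residual `r_A = y − P_A y`, where `P_A` is the orthogonal projection
onto `span{φ_j : j ∈ A}`. -/
noncomputable def lsResidual {n m : ℕ} (φ : Fin m → EuclideanSpace ℝ (Fin n))
    (y : EuclideanSpace ℝ (Fin n)) (A : Finset (Fin m)) : EuclideanSpace ℝ (Fin n) :=
  y - (Submodule.orthogonalProjectionOnto (Submodule.span ℝ (φ '' (A : Set (Fin m)))) y :
    EuclideanSpace ℝ (Fin n))

/-- The smallest singular value of the matrix with columns `φ j`,
`σ_min = inf {‖Σ_j v_j φ_j‖ : ‖v‖₂ = 1}`. -/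
noncomputable def sigmaMin {n : ℕ} {ι : Type*} [Fintype ι]
    (φ : ι → EuclideanSpace ℝ (Fin n)) : ℝ :=
  sInf {t : ℝ | ∃ v : EuclideanSpace ℝ ι, ‖v‖ = 1 ∧ t = ‖∑ j, v j • φ j‖}

open scoped RealInnerProductSpace

section helpers
variable {n m : ℕ}

private lemma sigmaMin_nonneg {ι : Type*} [Fintype ι] (φ : ι → EuclideanSpace ℝ (Fin n)) :
    0 ≤ sigmaMin φ := by
  apply Real.sInf_nonneg
  rintro t ⟨v, -, rfl⟩
  positivity

private lemma sigmaMin_mul_norm_le {ι : Type*} [Fintype ι] (φ : ι → EuclideanSpace ℝ (Fin n))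
    (v : EuclideanSpace ℝ ι) : sigmaMin φ * ‖v‖ ≤ ‖∑ j, v j • φ j‖ := by
  rcases eq_or_ne v 0 with rfl | hv
  · simp
  · have hn : (0:ℝ) < ‖v‖ := norm_pos_iff.2 hv
    have hmem : ‖∑ j, (‖v‖⁻¹ • v) j • φ j‖ ∈
        {t : ℝ | ∃ w : EuclideanSpace ℝ ι, ‖w‖ = 1 ∧ t = ‖∑ j, w j • φ j‖} := by
      refine ⟨‖v‖⁻¹ • v, ?_, rfl⟩
      rw [norm_smul, norm_inv, norm_norm, inv_mul_cancel₀ hn.ne']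
    have hle : sigmaMin φ ≤ ‖∑ j, (‖v‖⁻¹ • v) j • φ j‖ :=
      csInf_le ⟨0, by rintro t ⟨w, -, rfl⟩; positivity⟩ hmem
    have hsum : ∑ j, (‖v‖⁻¹ • v) j • φ j = ‖v‖⁻¹ • ∑ j, v j • φ j := by
      rw [Finset.smul_sum]
      refine Finset.sum_congr rfl fun j _ => ?_
      simp [smul_smul]
    rw [hsum, norm_smul, norm_inv, norm_norm] at hle
    have := mul_le_mul_of_nonneg_right hle hn.le
    calc sigmaMin φ * ‖v‖ ≤ ‖v‖⁻¹ * ‖∑ j, v j • φ j‖ * ‖v‖ := this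
      _ = ‖∑ j, v j • φ j‖ := by field_simp

private lemma span_rep (φ : Fin m → EuclideanSpace ℝ (Fin n)) (s : Finset (Fin m))
    (v : EuclideanSpace ℝ (Fin n)) (hv : v ∈ Submodule.span ℝ (φ '' (s : Set (Fin m)))) :
    ∃ c : Fin m → ℝ, (∀ l, l ∉ s → c l = 0) ∧ v = ∑ l ∈ s, c l • φ l := by
  induction hv using Submodule.span_induction with
  | mem u hu =>
      obtain ⟨l, hl, rfl⟩ := hu
      refine ⟨fun l' => if l' = l then 1 else 0, ?_, ?_⟩
      · intro l' hl'
        simp only [ite_eq_right_iff]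
        intro h; exact absurd (h ▸ hl) hl'
      · symm
        rw [Finset.sum_congr rfl (fun l' (_ : l' ∈ s) =>
          (by split <;> simp : (if l' = l then (1:ℝ) else 0) • φ l' = if l' = l then φ l' else 0))]
        rw [Finset.sum_ite_eq' s l (fun l' => φ l')]
        simp [Finset.mem_coe.1 hl]
  | zero => exact ⟨0, fun _ _ => rfl, by simp⟩
  | add u w hu hw ihu ihw =>
      obtain ⟨c, hc0, rfl⟩ := ihu
      obtain ⟨c', hc'0, rfl⟩ := ihw
      exact ⟨c + c', fun l hl => by simp [hc0 l hl, hc'0 l hl],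
        by rw [← Finset.sum_add_distrib]; exact Finset.sum_congr rfl fun l _ => (add_smul _ _ _).symm⟩
  | smul a u hu ihu =>
      obtain ⟨c, hc0, rfl⟩ := ihu
      exact ⟨a • c, fun l hl => by simp [hc0 l hl],
        by rw [Finset.smul_sum]; exact Finset.sum_congr rfl fun l _ => by simp [smul_smul]⟩

private lemma sigma_sq_bound (φ : Fin m → EuclideanSpace ℝ (Fin n)) (A : Finset (Fin m))
    (c : Fin m → ℝ) :
    sigmaMin (fun i : {i // i ∈ A} => φ i.val) ^ 2 * ∑ l ∈ A, c l ^ 2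
      ≤ ‖∑ l ∈ A, c l • φ l‖ ^ 2 := by
  set v : EuclideanSpace ℝ {i // i ∈ A} := WithLp.toLp 2 (fun j : {i // i ∈ A} => c j.val) with hv
  have h1 := sigmaMin_mul_norm_le (fun i : {i // i ∈ A} => φ i.val) v
  have hs : ∑ j, v j • φ j.val = ∑ l ∈ A, c l • φ l :=
    Finset.sum_coe_sort A (fun l => c l • φ l)
  rw [hs] at h1
  have hnv : ‖v‖ = Real.sqrt (∑ l ∈ A, c l ^ 2) := by
    rw [EuclideanSpace.norm_eq]
    congr 1
    rw [← Finset.sum_coe_sort A (fun l => c l ^ 2)]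
    exact Finset.sum_congr rfl fun j _ => by rw [Real.norm_eq_abs, sq_abs]
  have hnn : 0 ≤ sigmaMin (fun i : {i // i ∈ A} => φ i.val) * ‖v‖ :=
    mul_nonneg (sigmaMin_nonneg _) (norm_nonneg _)
  have h2 := pow_le_pow_left₀ hnn h1 2
  rw [mul_pow, hnv, Real.sq_sqrt (Finset.sum_nonneg fun l _ => sq_nonneg _)] at h2
  exact h2

end helpers


section qvsec
variable {n m : ℕ}

/-- the residual direction vector for column `k` w.r.t. the other columns of `A` -/
private noncomputable def qv (φ : Fin m → EuclideanSpace ℝ (Fin n)) (A : Finset (Fin m))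
    (k : Fin m) : EuclideanSpace ℝ (Fin n) :=
  φ k - (Submodule.orthogonalProjectionOnto (Submodule.span ℝ (φ '' ((A.erase k) : Set (Fin m)))) (φ k) :
    EuclideanSpace ℝ (Fin n))

private lemma qv_inner_zero (φ : Fin m → EuclideanSpace ℝ (Fin n)) (A : Finset (Fin m))
    (k : Fin m) {u : EuclideanSpace ℝ (Fin n)}
    (hu : u ∈ Submodule.span ℝ (φ '' ((A.erase k) : Set (Fin m)))) :
    ⟪qv φ A k, u⟫ = 0 := by
  have h := Submodule.sub_starProjection_mem_orthogonal (K := Submodule.span ℝ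
    (φ '' ((A.erase k) : Set (Fin m)))) (φ k)
  exact (Submodule.mem_orthogonal' _ _).1 h u hu

private lemma phi_mem_span_erase (φ : Fin m → EuclideanSpace ℝ (Fin n)) (A : Finset (Fin m))
    {k l : Fin m} (hl : l ∈ A.erase k) :
    φ l ∈ Submodule.span ℝ (φ '' ((A.erase k) : Set (Fin m))) :=
  Submodule.subset_span (Set.mem_image_of_mem φ (by exact_mod_cast hl))

private lemma qv_inner_phi (φ : Fin m → EuclideanSpace ℝ (Fin n)) (A : Finset (Fin m))
    {k l : Fin m} (hl : l ∈ A.erase k) : ⟪qv φ A k, φ l⟫ = 0 :=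
  qv_inner_zero φ A k (phi_mem_span_erase φ A hl)

private lemma qv_inner_phi_self (φ : Fin m → EuclideanSpace ℝ (Fin n)) (A : Finset (Fin m))
    (k : Fin m) : ⟪qv φ A k, φ k⟫ = ‖qv φ A k‖ ^ 2 := by
  have h1 : φ k = qv φ A k + (Submodule.orthogonalProjectionOnto (Submodule.span ℝ
      (φ '' ((A.erase k) : Set (Fin m)))) (φ k) : EuclideanSpace ℝ (Fin n)) := by
    rw [qv]; abel
  nth_rewrite 1 [h1]
  rw [inner_add_right, qv_inner_zero φ A k (Submodule.coe_mem _),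
    real_inner_self_eq_norm_sq, add_zero]

private lemma qv_rep (φ : Fin m → EuclideanSpace ℝ (Fin n)) (A : Finset (Fin m))
    {k : Fin m} (hk : k ∈ A) :
    ∃ g : Fin m → ℝ, g k = 1 ∧ qv φ A k = ∑ l ∈ A, g l • φ l := by
  obtain ⟨w, hw0, hw⟩ := span_rep φ (A.erase k) _ (Submodule.coe_mem
    ((Submodule.orthogonalProjectionOnto (Submodule.span ℝ (φ '' ((A.erase k) : Set (Fin m)))) (φ k))))
  refine ⟨fun l => (if l = k then 1 else 0) - w l, by simp [hw0 k (Finset.notMem_erase k A)], ?_⟩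
  have h1 : ∑ l ∈ A, ((if l = k then (1:ℝ) else 0) - w l) • φ l
      = (∑ l ∈ A, (if l = k then (1:ℝ) else 0) • φ l) - ∑ l ∈ A, w l • φ l := by
    rw [← Finset.sum_sub_distrib]
    exact Finset.sum_congr rfl fun l _ => (sub_smul _ _ _)
  have h2 : ∑ l ∈ A, (if l = k then (1:ℝ) else 0) • φ l = φ k := by
    rw [Finset.sum_congr rfl (fun l (_ : l ∈ A) =>
      (by split <;> simp : (if l = k then (1:ℝ) else 0) • φ l = if l = k then φ l else 0))]
    rw [Finset.sum_ite_eq' A k (fun l => φ l)]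
    simp [hk]
  have h3 : ∑ l ∈ A, w l • φ l = ∑ l ∈ A.erase k, w l • φ l := by
    symm
    apply Finset.sum_subset (Finset.erase_subset k A)
    intro l _ hl
    rw [hw0 l hl, zero_smul]
  rw [h1, h2, h3, ← hw, qv]

private lemma qv_mem_span (φ : Fin m → EuclideanSpace ℝ (Fin n)) (A : Finset (Fin m))
    {k : Fin m} (hk : k ∈ A) :
    qv φ A k ∈ Submodule.span ℝ (φ '' (A : Set (Fin m))) := by
  apply sub_mem
  · exact Submodule.subset_span (Set.mem_image_of_mem φ (by exact_mod_cast hk))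
  · exact Submodule.span_mono (Set.image_mono (f := φ) (by exact_mod_cast Finset.erase_subset k A))
      (Submodule.coe_mem _)

private lemma sigma_le_norm_qv (φ : Fin m → EuclideanSpace ℝ (Fin n)) (A : Finset (Fin m))
    {k : Fin m} (hk : k ∈ A) :
    sigmaMin (fun i : {i // i ∈ A} => φ i.val) ≤ ‖qv φ A k‖ := by
  obtain ⟨g, hgk, hg⟩ := qv_rep φ A hk
  set σ := sigmaMin (fun i : {i // i ∈ A} => φ i.val) with hσ
  have h1 : σ^2 * ∑ l ∈ A, g l ^ 2 ≤ ‖qv φ A k‖^2 := by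
    rw [hg]; exact sigma_sq_bound φ A g
  have h2 : (1:ℝ) ≤ ∑ l ∈ A, g l ^ 2 := by
    calc (1:ℝ) = g k ^ 2 := by rw [hgk]; norm_num
      _ ≤ ∑ l ∈ A, g l ^ 2 := Finset.single_le_sum (f := fun l => g l ^ 2) (fun l _ => sq_nonneg _) hk
  have hσ0 : 0 ≤ σ := sigmaMin_nonneg _
  nlinarith [norm_nonneg (qv φ A k)]

private lemma norm_qv_le_one (φ : Fin m → EuclideanSpace ℝ (Fin n)) (A : Finset (Fin m))
    (hunit : ∀ j, ‖φ j‖ = 1) (k : Fin m) : ‖qv φ A k‖ ≤ 1 := by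
  set P := (Submodule.orthogonalProjectionOnto (Submodule.span ℝ (φ '' ((A.erase k) : Set (Fin m)))) (φ k) :
    EuclideanSpace ℝ (Fin n)) with hP
  have h1 : φ k = qv φ A k + P := by rw [qv, hP]; abel
  have h2 : ⟪qv φ A k, P⟫ = 0 := qv_inner_zero φ A k (Submodule.coe_mem _)
  have h3 : ‖φ k‖^2 = ‖qv φ A k‖^2 + 2 * ⟪qv φ A k, P⟫ + ‖P‖^2 := by
    rw [h1, norm_add_sq_real]
  rw [hunit k, h2] at h3
  nlinarith [norm_nonneg (qv φ A k), norm_nonneg P, sq_nonneg (‖P‖)]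

private lemma qv_inner_rep (φ : Fin m → EuclideanSpace ℝ (Fin n)) (A : Finset (Fin m))
    {i : Fin m} (hi : i ∈ A) (g : Fin m → ℝ) (v : EuclideanSpace ℝ (Fin n))
    (hv : v = ∑ l ∈ A, g l • φ l) :
    ⟪qv φ A i, v⟫ = g i * ‖qv φ A i‖^2 := by
  rw [hv, inner_sum]
  rw [Finset.sum_eq_single_of_mem i hi]
  · rw [real_inner_smul_right, qv_inner_phi_self]
  · intro l hl hli
    rw [real_inner_smul_right, qv_inner_phi φ A (Finset.mem_erase.2 ⟨hli, hl⟩), mul_zero]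

private lemma residual_sq (φ : Fin m → EuclideanSpace ℝ (Fin n)) (A : Finset (Fin m))
    (y : EuclideanSpace ℝ (Fin n)) {k : Fin m} (hk : k ∈ A) (hq : qv φ A k ≠ 0) :
    ‖lsResidual φ y (A.erase k)‖^2
      = ‖lsResidual φ y A‖^2 + (⟪y, qv φ A k⟫ / ‖qv φ A k‖)^2 := by
  set KA := Submodule.span ℝ (φ '' (A : Set (Fin m))) with hKA
  set KB := Submodule.span ℝ (φ '' ((A.erase k) : Set (Fin m))) with hKB
  set PA := (Submodule.orthogonalProjectionOnto KA y : EuclideanSpace ℝ (Fin n)) with hPA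
  set PB := (Submodule.orthogonalProjectionOnto KB y : EuclideanSpace ℝ (Fin n)) with hPB
  set rA := lsResidual φ y A with hrA
  set z := PA - PB with hz
  have hrAeq : rA = y - PA := by rw [hrA, hPA, hKA]; rfl
  have hrBeq : lsResidual φ y (A.erase k) = y - PB := by rw [hPB, hKB]; rfl
  have hKsub : KB ≤ KA := Submodule.span_mono
    (Set.image_mono (f := φ) (by exact_mod_cast Finset.erase_subset k A))
  have hrAmem : rA ∈ KAᗮ := by
    rw [hrAeq, hPA]; exact Submodule.sub_starProjection_mem_orthogonal y
  have hsplit : lsResidual φ y (A.erase k) = rA + z := by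
    rw [hrBeq, hrAeq, hz]; abel
  have hzKA : z ∈ KA := by
    rw [hz, hPA]
    exact sub_mem (Submodule.coe_mem _) (hKsub (by rw [hPB]; exact Submodule.coe_mem _))
  have hinner0 : ⟪rA, z⟫ = 0 := (Submodule.mem_orthogonal' _ _).1 hrAmem z hzKA
  have hpyth : ‖lsResidual φ y (A.erase k)‖^2 = ‖rA‖^2 + ‖z‖^2 := by
    rw [hsplit, norm_add_sq_real, hinner0]; ring
  have hzperp : ∀ u ∈ KB, ⟪z, u⟫ = 0 := by
    intro u hu
    have h1 : y - PB ∈ KBᗮ := by rw [hPB]; exact Submodule.sub_starProjection_mem_orthogonal y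
    have h2 : rA ∈ KBᗮ := (Submodule.orthogonal_le hKsub) hrAmem
    have h3 : z = (y - PB) - rA := by rw [hz, hrAeq]; abel
    rw [h3, inner_sub_left, (Submodule.mem_orthogonal' _ _).1 h1 u hu,
      (Submodule.mem_orthogonal' _ _).1 h2 u hu]
    ring
  have hzKA' : z ∈ Submodule.span ℝ (φ '' (A : Set (Fin m))) := by rw [← hKA]; exact hzKA
  obtain ⟨c, hc0, hcrep⟩ := span_rep φ A z hzKA'
  have hinq : ⟪qv φ A k, z⟫ = c k * ‖qv φ A k‖^2 := qv_inner_rep φ A hk c z hcrep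
  have hPφmem : (Submodule.orthogonalProjectionOnto KB (φ k) : EuclideanSpace ℝ (Fin n)) ∈ KB :=
    Submodule.coe_mem _
  have hφk : φ k = qv φ A k + (Submodule.orthogonalProjectionOnto KB (φ k) : EuclideanSpace ℝ (Fin n)) := by
    rw [qv, hKB]; abel
  have hzφ : ⟪z, φ k⟫ = c k * ‖qv φ A k‖^2 := by
    rw [hφk, inner_add_right, hzperp _ hPφmem, add_zero, real_inner_comm, hinq]
  have hzz : ‖z‖^2 = c k ^2 * ‖qv φ A k‖^2 := by
    have h1 : ⟪z, z⟫ = c k * ⟪z, φ k⟫ := by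
      nth_rewrite 2 [hcrep]
      rw [inner_sum, Finset.sum_eq_single_of_mem k hk]
      · rw [real_inner_smul_right]
      · intro l hl hlk
        rw [real_inner_smul_right,
          hzperp _ (by rw [hKB]; exact phi_mem_span_erase φ A (Finset.mem_erase.2 ⟨hlk, hl⟩)),
          mul_zero]
    rw [← real_inner_self_eq_norm_sq, h1, hzφ]; ring
  have hyq : ⟪y, qv φ A k⟫ = c k * ‖qv φ A k‖^2 := by
    have h1 : y = rA + PB + z := by rw [hrAeq, hz]; abel
    have hqKA : qv φ A k ∈ KA := by rw [hKA]; exact qv_mem_span φ A hk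
    have e1 : ⟪rA, qv φ A k⟫ = 0 := (Submodule.mem_orthogonal' _ _).1 hrAmem _ hqKA
    have e2 : ⟪PB, qv φ A k⟫ = 0 := by
      rw [real_inner_comm]
      exact qv_inner_zero φ A k (show PB ∈ Submodule.span ℝ (φ '' ((A.erase k) : Set (Fin m)))
        by rw [← hKB, hPB]; exact Submodule.coe_mem _)
    rw [h1, inner_add_left, inner_add_left, e1, e2, real_inner_comm, hinq]; ring
  have hqn : ‖qv φ A k‖ ≠ 0 := norm_ne_zero_iff.2 hq
  rw [hpyth, hzz, hyq]
  have hfs : (c k * ‖qv φ A k‖^2 / ‖qv φ A k‖)^2 = c k^2 * ‖qv φ A k‖^2 := by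
    field_simp
  rw [hfs, hrA]

end qvsec


private lemma endgame (σ Di Dj T xj X E : ℝ)
    (hσpos : 0 < σ)
    (hDi0 : 0 < Di) (hDj0 : 0 < Dj) (hσDi : σ ≤ Di) (hσDj : σ ≤ Dj)
    (hDi1 : Di ≤ 1) (hDj1 : Dj ≤ 1)
    (hxj : xj ≠ 0) (hTnn : 0 ≤ T)
    (hkey : σ^2 * (T^2 * (Di⁻¹)^2 + T^2 * (Dj⁻¹)^2) ≤ 2*T)
    (hM2 : (|xj| * Dj)^2 ≤ E^2 * (2*T))
    (hX2 : X^2 ≤ xj^2)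
    (hnoise2 : E^2 * (2*(2-σ^2)) < σ^2 * X^2) : False := by
  have hM : 0 < |xj| * Dj := mul_pos (abs_pos.2 hxj) hDj0
  have hE2 : 0 ≤ E^2 := sq_nonneg E
  have hC0 : xj^2 * Dj^2 ≤ E^2 * (2*T) := by
    have h1 : (|xj| * Dj)^2 = xj^2 * Dj^2 := by rw [mul_pow, sq_abs]
    linarith [h1 ▸ hM2]
  have hTpos : 0 < T := by
    rcases hTnn.lt_or_eq with h | h
    · exact h
    · exfalso
      rw [← h, mul_zero, mul_zero] at hC0
      have h2 : 0 < xj^2 * Dj^2 := mul_pos (pow_pos (abs_pos.2 hxj) 2 |>.trans_eq (sq_abs xj)) (pow_pos hDj0 2)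
      linarith
  have e1 : σ^2 * (T^2 * Dj^2 + T^2 * Di^2) ≤ 2*T*(Di^2*Dj^2) := by
    have hmul := mul_le_mul_of_nonneg_right hkey
      (le_of_lt (mul_pos (pow_pos hDi0 2) (pow_pos hDj0 2)))
    have heq : σ^2 * (T^2 * (Di⁻¹)^2 + T^2 * (Dj⁻¹)^2) * (Di^2*Dj^2)
        = σ^2 * (T^2 * Dj^2 + T^2 * Di^2) := by
      field_simp
    linarith [heq ▸ hmul]
  have B1 : σ^2 * (T*(Di^2+Dj^2)) ≤ 2*(Di^2*Dj^2) := by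
    by_contra hB
    push_neg at hB
    have h1 := mul_lt_mul_of_pos_left hB hTpos
    ring_nf at h1 e1
    linarith
  have C2 : xj^2 * (σ^2 * (Di^2 + Dj^2)) ≤ 4 * E^2 * Di^2 := by
    have h1 : xj^2*Dj^2 * (σ^2*(Di^2+Dj^2)) ≤ E^2*(2*T) * (σ^2*(Di^2+Dj^2)) :=
      mul_le_mul_of_nonneg_right hC0 (by positivity)
    have h3 : 2*E^2 * (σ^2*(T*(Di^2+Dj^2))) ≤ 2*E^2*(2*(Di^2*Dj^2)) :=
      mul_le_mul_of_nonneg_left B1 (by positivity)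
    have h4 : xj^2 * (σ^2*(Di^2+Dj^2)) * Dj^2 ≤ (4*E^2*Di^2) * Dj^2 := by
      ring_nf at h1 h3 ⊢
      linarith
    exact le_of_mul_le_mul_right h4 (pow_pos hDj0 2)
  have p1 : σ^2 ≤ Dj^2 := pow_le_pow_left₀ hσpos.le hσDj 2
  have p0 : σ^2 ≤ 1 := by simpa using pow_le_pow_left₀ hσpos.le (le_trans hσDi hDi1) 2
  have p2 : Di^2 ≤ 1 := by simpa using pow_le_pow_left₀ hDi0.le hDi1 2
  have p3 : σ^2 * Di^2 ≤ Dj^2 := by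
    simpa using mul_le_mul p1 p2 (sq_nonneg Di) (sq_nonneg Dj)
  have p4 : σ^2 * Dj^2 ≤ Dj^2 := by
    simpa using mul_le_mul_of_nonneg_right p0 (sq_nonneg Dj)
  have D1 : 2*Di^2 ≤ (2-σ^2)*(Di^2+Dj^2) := by
    ring_nf at p3 p4 ⊢
    linarith
  have hfin : xj^2 * σ^2 ≤ 2*E^2*(2-σ^2) := by
    have h7 : 2*E^2*(2*Di^2) ≤ 2*E^2*((2-σ^2)*(Di^2+Dj^2)) :=
      mul_le_mul_of_nonneg_left D1 (by positivity)
    have h6 : (xj^2*σ^2) * (Di^2+Dj^2) ≤ (2*E^2*(2-σ^2)) * (Di^2+Dj^2) := by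
      ring_nf at C2 h7 ⊢
      linarith
    exact le_of_mul_le_mul_right h6 (by positivity)
  have h8 : σ^2 * X^2 ≤ σ^2 * xj^2 := mul_le_mul_of_nonneg_left hX2 (sq_nonneg σ)
  ring_nf at hfin hnoise2 h8
  linarith

private lemma lt_of_sq_lt_sq' (a b : ℝ) (ha : 0 ≤ a) (hb : 0 ≤ b) (h : a^2 < b^2) : a < b := by
  nlinarith


set_option maxHeartbeats 1000000 in
/-- single-step deletion-correctness invariant behind Theorem 4 of the
paper: if `S ⊊ A`, the submatrix `Φ_A` has full column rank, and
`(σ_min(Φ_A)/√(2(2−σ_min(Φ_A)²))) min_{i∈S}|x_i| > ‖ε‖₂`, then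
`min_{i∈A∖S} ‖r_{A∖{i}}‖ < min_{i∈S} ‖r_{A∖{i}}‖`; in particular every minimizer of
`‖r_{A∖{i}}‖` over `i ∈ A` lies in `A∖S`. -/
theorem backward_regression_deletion_invariant {n m : ℕ}
    (φ : Fin m → EuclideanSpace ℝ (Fin n)) (hunit : ∀ j, ‖φ j‖ = 1)
    (x : Fin m → ℝ) (S : Finset (Fin m)) (hsupp : ∀ i, x i ≠ 0 ↔ i ∈ S)
    (hSne : S.Nonempty)
    (ε : EuclideanSpace ℝ (Fin n)) (y : EuclideanSpace ℝ (Fin n))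
    (hy : y = (∑ j, x j • φ j) + ε)
    (A : Finset (Fin m)) (hSA : S ⊂ A)
    (hrank : LinearIndependent ℝ (fun i : {i // i ∈ A} => φ i.val))
    (hnoise : sigmaMin (fun i : {i // i ∈ A} => φ i.val) /
          Real.sqrt (2 * (2 - sigmaMin (fun i : {i // i ∈ A} => φ i.val) ^ 2)) *
        (S.inf' hSne fun i => |x i|) > ‖ε‖) :
    (∃ i ∈ A, i ∉ S ∧ ∀ j ∈ S, ‖lsResidual φ y (A.erase i)‖ < ‖lsResidual φ y (A.erase j)‖) ∧
    (∀ i ∈ A, (∀ j ∈ A, ‖lsResidual φ y (A.erase i)‖ ≤ ‖lsResidual φ y (A.erase j)‖) →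
      i ∉ S) := by
  classical
  set σ := sigmaMin (fun i : {i // i ∈ A} => φ i.val) with hσdef
  set X := S.inf' hSne (fun i => |x i|) with hXdef
  have hX : 0 < X := by
    rw [hXdef, Finset.lt_inf'_iff]
    exact fun i hi => abs_pos.2 ((hsupp i).2 hi)
  have hε0 : (0:ℝ) ≤ ‖ε‖ := norm_nonneg ε
  have hfrac : 0 < σ / Real.sqrt (2*(2-σ^2)) := by
    by_contra h
    push_neg at h
    have h2 : σ / Real.sqrt (2*(2-σ^2)) * X ≤ 0 :=
      mul_nonpos_iff.2 (Or.inr ⟨h, hX.le⟩)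
    have h3 : σ / Real.sqrt (2 * (2 - σ^2)) * X > ‖ε‖ := hnoise
    linarith
  have hsqrtpos : 0 < Real.sqrt (2*(2-σ^2)) := by
    rcases (Real.sqrt_nonneg (2*(2-σ^2))).lt_or_eq with h | h
    · exact h
    · rw [← h, div_zero] at hfrac; exact absurd hfrac (lt_irrefl 0)
  have hσpos : 0 < σ := by
    by_contra h
    push_neg at h
    have h2 : σ / Real.sqrt (2*(2-σ^2)) ≤ 0 :=
      div_nonpos_iff.2 (Or.inr ⟨h, hsqrtpos.le⟩)
    linarith
  have hQpos : 0 < 2*(2-σ^2) := by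
    by_contra h
    push_neg at h
    have h0 : Real.sqrt (2*(2-σ^2)) = 0 := Real.sqrt_eq_zero'.2 (by linarith)
    rw [h0] at hsqrtpos
    exact absurd hsqrtpos (lt_irrefl 0)
  have hσ2 : σ^2 < 2 := by nlinarith
  have hnoise2 : ‖ε‖^2 * (2*(2-σ^2)) < σ^2 * X^2 := by
    have h1 : ‖ε‖^2 < (σ / Real.sqrt (2*(2-σ^2)) * X)^2 := by
      have h3 : σ / Real.sqrt (2 * (2 - σ^2)) * X > ‖ε‖ := hnoise
      nlinarith
    have h2 : (σ / Real.sqrt (2*(2-σ^2)) * X)^2 = σ^2 * X^2 / (2*(2-σ^2)) := by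
      rw [mul_pow, div_pow, Real.sq_sqrt hQpos.le]; ring
    rw [h2] at h1
    exact (lt_div_iff₀ hQpos).1 h1
  -- basic facts about the residual directions
  have hqne : ∀ k ∈ A, qv φ A k ≠ 0 := by
    intro k hk h0
    have h := sigma_le_norm_qv φ A hk
    rw [← hσdef, h0, norm_zero] at h
    linarith
  have hdpos : ∀ k ∈ A, 0 < ‖qv φ A k‖ := by
    intro k hk
    have h := sigma_le_norm_qv φ A hk
    rw [← hσdef] at h
    linarith
  have hdge : ∀ k ∈ A, σ ≤ ‖qv φ A k‖ := by
    intro k hk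
    have h := sigma_le_norm_qv φ A hk
    rwa [← hσdef] at h
  have hdle : ∀ k, ‖qv φ A k‖ ≤ 1 := norm_qv_le_one φ A hunit
  have hyq : ∀ k ∈ A, ⟪y, qv φ A k⟫ = x k * ‖qv φ A k‖^2 + ⟪ε, qv φ A k⟫ := by
    intro k hk
    rw [hy, inner_add_left]
    congr 1
    rw [sum_inner, Finset.sum_eq_single k]
    · rw [real_inner_smul_left, real_inner_comm, qv_inner_phi_self]
    · intro j _ hjk
      rcases eq_or_ne (x j) 0 with h0 | h0
      · rw [h0, zero_smul, inner_zero_left]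
      · have hjS : j ∈ S := (hsupp j).1 h0
        rw [real_inner_smul_left, real_inner_comm,
          qv_inner_phi φ A (Finset.mem_erase.2 ⟨hjk, hSA.subset hjS⟩), mul_zero]
    · intro hk'; exact absurd (Finset.mem_univ k) hk'
  -- the core strict comparison
  have hcore : ∀ i ∈ A, i ∉ S → ∀ j ∈ S,
      ‖lsResidual φ y (A.erase i)‖ < ‖lsResidual φ y (A.erase j)‖ := by
    intro i hiA hiS j hjS
    have hjA : j ∈ A := hSA.subset hjS
    have hij : i ≠ j := fun h => hiS (h ▸ hjS)
    set Di := ‖qv φ A i‖ with hDi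
    set Dj := ‖qv φ A j‖ with hDj
    have hDi0 : 0 < Di := hdpos i hiA
    have hDj0 : 0 < Dj := hdpos j hjA
    have hσDi : σ ≤ Di := hdge i hiA
    have hσDj : σ ≤ Dj := hdge j hjA
    have hDi1 : Di ≤ 1 := hdle i
    have hDj1 : Dj ≤ 1 := hdle j
    have hxi : x i = 0 := by
      by_contra h
      exact hiS ((hsupp i).1 h)
    set a := ⟪ε, qv φ A i⟫ / Di with ha
    set b := ⟪ε, qv φ A j⟫ / Dj with hb
    have hti : ⟪y, qv φ A i⟫ / Di = a := by
      rw [hyq i hiA, hxi, ha]; ring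
    have htj : ⟪y, qv φ A j⟫ / Dj = x j * Dj + b := by
      rw [hyq j hjA, ← hDj, hb]
      field_simp
    have hmain : a^2 < (x j * Dj + b)^2 := by
      by_contra hcon
      push_neg at hcon
      have hxj : x j ≠ 0 := (hsupp j).2 hjS
      have hM : 0 < |x j| * Dj := mul_pos (abs_pos.2 hxj) hDj0
      have habs : |x j * Dj + b| ≤ |a| := by
        have h1 := Real.sqrt_le_sqrt hcon
        rwa [Real.sqrt_sq_eq_abs, Real.sqrt_sq_eq_abs] at h1
      have hMle : |x j| * Dj ≤ |a| + |b| := by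
        have h1 : |x j * Dj| ≤ |x j * Dj + b| + |b| := by
          calc |x j * Dj| = |(x j * Dj + b) + (-b)| := by ring_nf
            _ ≤ |x j * Dj + b| + |(-b)| := abs_add_le _ _
            _ = |x j * Dj + b| + |b| := by rw [abs_neg]
        rw [abs_mul, abs_of_pos hDj0] at h1
        linarith
      set ui := Di⁻¹ • qv φ A i with hui
      set uj := Dj⁻¹ • qv φ A j with huj
      have hnui : ‖ui‖ = 1 := by
        rw [hui, norm_smul, Real.norm_eq_abs, abs_inv, abs_of_pos hDi0, ← hDi,
          inv_mul_cancel₀ hDi0.ne']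
      have hnuj : ‖uj‖ = 1 := by
        rw [huj, norm_smul, Real.norm_eq_abs, abs_inv, abs_of_pos hDj0, ← hDj,
          inv_mul_cancel₀ hDj0.ne']
      set s1 : ℝ := if 0 ≤ a then 1 else -1 with hs1def
      set s2 : ℝ := if 0 ≤ b then 1 else -1 with hs2def
      have hs1 : s1 = 1 ∨ s1 = -1 := by rw [hs1def]; split <;> simp
      have hs2 : s2 = 1 ∨ s2 = -1 := by rw [hs2def]; split <;> simp
      have hs1a : s1 * a = |a| := by
        rw [hs1def]
        split
        · rw [abs_of_nonneg ‹_›]; ring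
        · rw [abs_of_neg (lt_of_not_ge ‹_›)]; ring
      have hs2b : s2 * b = |b| := by
        rw [hs2def]
        split
        · rw [abs_of_nonneg ‹_›]; ring
        · rw [abs_of_neg (lt_of_not_ge ‹_›)]; ring
      set v := s1 • ui + s2 • uj with hv
      set ρ := ⟪ui, uj⟫ with hρ
      have e1i : ⟪ε, ui⟫ = a := by
        rw [hui, real_inner_smul_right, ha]
        exact (div_eq_inv_mul _ _).symm
      have e1j : ⟪ε, uj⟫ = b := by
        rw [huj, real_inner_smul_right, hb]
        exact (div_eq_inv_mul _ _).symm
      have hεv : ⟪ε, v⟫ = |a| + |b| := by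
        have h1 : ⟪ε, s1 • ui⟫ = s1 * a := by rw [real_inner_smul_right, e1i]
        have h2 : ⟪ε, s2 • uj⟫ = s2 * b := by rw [real_inner_smul_right, e1j]
        rw [hv, inner_add_right, h1, h2, hs1a, hs2b]
      have habs1 : ‖(s1:ℝ)‖ = 1 := by rcases hs1 with h|h <;> rw [h] <;> simp
      have habs2 : ‖(s2:ℝ)‖ = 1 := by rcases hs2 with h|h <;> rw [h] <;> simp
      have hn1 : ‖s1 • ui‖ = 1 := by rw [norm_smul, habs1, hnui, mul_one]
      have hn2 : ‖s2 • uj‖ = 1 := by rw [norm_smul, habs2, hnuj, mul_one]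
      have hip : ⟪s1 • ui, s2 • uj⟫ = s1*s2*ρ := by
        rw [real_inner_smul_left, real_inner_smul_right, ← hρ]
        ring
      have hv2 : ‖v‖^2 = 2 + 2*(s1*s2)*ρ := by
        rw [hv, norm_add_sq_real, hn1, hn2, hip]
        ring
      obtain ⟨gi, hgi1, hgi2⟩ := qv_rep φ A hiA
      obtain ⟨gj, hgj1, hgj2⟩ := qv_rep φ A hjA
      have hρi : ⟪qv φ A i, qv φ A j⟫ = gj i * Di^2 := by
        rw [qv_inner_rep φ A hiA gj _ hgj2, ← hDi]
      have hρj : ⟪qv φ A j, qv φ A i⟫ = gi j * Dj^2 := by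
        rw [qv_inner_rep φ A hjA gi _ hgi2, ← hDj]
      have hρval : ρ = Di⁻¹ * (Dj⁻¹ * (gj i * Di^2)) := by
        rw [hρ, hui, huj, real_inner_smul_left, real_inner_smul_right, hρi]
      have hρval' : ρ = Dj⁻¹ * (Di⁻¹ * (gi j * Dj^2)) := by
        rw [hρ, real_inner_comm, hui, huj, real_inner_smul_left, real_inner_smul_right, hρj]
      have hgji : Dj⁻¹ * gj i = ρ * Di⁻¹ := by
        rw [hρval]
        field_simp
      have hgij : Di⁻¹ * gi j = ρ * Dj⁻¹ := by
        rw [hρval']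
        field_simp
      have hkey0 := sigma_sq_bound φ A (fun l => s1 * (Di⁻¹ * gi l) + s2 * (Dj⁻¹ * gj l))
      rw [← hσdef] at hkey0
      have hsum : ∑ l ∈ A, (s1 * (Di⁻¹ * gi l) + s2 * (Dj⁻¹ * gj l)) • φ l = v := by
        rw [hv, hui, huj, hgi2, hgj2]
        simp only [Finset.smul_sum, ← Finset.sum_add_distrib]
        refine Finset.sum_congr rfl fun l _ => ?_
        rw [add_smul, smul_smul, smul_smul, smul_smul, smul_smul]
        ring_nf
      rw [hsum] at hkey0
      have hpair : (s1 * (Di⁻¹ * gi i) + s2 * (Dj⁻¹ * gj i))^2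
          + (s1 * (Di⁻¹ * gi j) + s2 * (Dj⁻¹ * gj j))^2
          ≤ ∑ l ∈ A, (s1 * (Di⁻¹ * gi l) + s2 * (Dj⁻¹ * gj l))^2 := by
        have hp0 : ∑ l ∈ ({i, j} : Finset (Fin m)), (s1 * (Di⁻¹ * gi l) + s2 * (Dj⁻¹ * gj l))^2
            = (s1 * (Di⁻¹ * gi i) + s2 * (Dj⁻¹ * gj i))^2
              + (s1 * (Di⁻¹ * gi j) + s2 * (Dj⁻¹ * gj j))^2 :=
          Finset.sum_pair hij
        rw [← hp0]
        apply Finset.sum_le_sum_of_subset_of_nonneg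
        · intro l hl
          rcases Finset.mem_insert.1 hl with h | h
          · exact h ▸ hiA
          · exact (Finset.mem_singleton.1 h) ▸ hjA
        · intro l _ _
          exact sq_nonneg _
      have hci : s1 * (Di⁻¹ * gi i) + s2 * (Dj⁻¹ * gj i) = (s1 + s2*ρ) * Di⁻¹ := by
        rw [hgi1, hgji]; ring
      have hcj : s1 * (Di⁻¹ * gi j) + s2 * (Dj⁻¹ * gj j) = (s2 + s1*ρ) * Dj⁻¹ := by
        rw [hgj1, hgij]; ring
      rw [hci, hcj] at hpair
      have hkey : σ^2 * (((s1 + s2*ρ) * Di⁻¹)^2 + ((s2 + s1*ρ) * Dj⁻¹)^2) ≤ ‖v‖^2 :=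
        le_trans (mul_le_mul_of_nonneg_left hpair (sq_nonneg σ)) hkey0
      -- Cauchy-Schwarz side
      have hMεv : |x j| * Dj ≤ ‖ε‖ * ‖v‖ := by
        have h1 := real_inner_le_norm ε v
        rw [hεv] at h1
        linarith
      have hM2 : (|x j| * Dj)^2 ≤ ‖ε‖^2 * ‖v‖^2 := by
        have h1 := mul_self_le_mul_self hM.le hMεv
        calc (|x j| * Dj)^2 = (|x j| * Dj) * (|x j| * Dj) := by ring
          _ ≤ (‖ε‖*‖v‖)*(‖ε‖*‖v‖) := h1
          _ = ‖ε‖^2*‖v‖^2 := by ring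
      -- numeric endgame
      set T := 1 + s1*s2*ρ with hT
      have hv2T : ‖v‖^2 = 2*T := by rw [hv2, hT]; ring
      have hTnn : 0 ≤ T := by
        have h1 := sq_nonneg ‖v‖
        rw [hv2T] at h1
        linarith
      have hsq1 : ((s1 + s2*ρ) * Di⁻¹)^2 = T^2 * (Di⁻¹)^2 := by
        have h1 : (s1 + s2*ρ)^2 = T^2 := by
          rw [hT]
          rcases hs1 with h|h <;> rcases hs2 with h'|h' <;> rw [h, h'] <;> ring
        rw [mul_pow, h1]
      have hsq2 : ((s2 + s1*ρ) * Dj⁻¹)^2 = T^2 * (Dj⁻¹)^2 := by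
        have h1 : (s2 + s1*ρ)^2 = T^2 := by
          rw [hT]
          rcases hs1 with h|h <;> rcases hs2 with h'|h' <;> rw [h, h'] <;> ring
        rw [mul_pow, h1]
      rw [hv2T, hsq1, hsq2] at hkey
      rw [hv2T] at hM2
      have hXxj : X ≤ |x j| := by rw [hXdef]; exact Finset.inf'_le _ hjS
      have hX2 : X^2 ≤ x j^2 := by
        have h1 := pow_le_pow_left₀ hX.le hXxj 2
        rwa [sq_abs] at h1
      exact endgame σ Di Dj T (x j) X ‖ε‖ hσpos hDi0 hDj0 hσDi hσDj hDi1 hDj1 hxj hTnn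
        hkey hM2 hX2 hnoise2
    -- from squared comparison to norm comparison
    have hRi := residual_sq φ A y hiA (hqne i hiA)
    have hRj := residual_sq φ A y hjA (hqne j hjA)
    rw [← hDi, hti] at hRi
    rw [← hDj, htj] at hRj
    have h2 : ‖lsResidual φ y (A.erase i)‖^2 < ‖lsResidual φ y (A.erase j)‖^2 := by
      rw [hRi, hRj]
      linarith
    exact lt_of_sq_lt_sq' _ _ (norm_nonneg _) (norm_nonneg _) h2
  obtain ⟨i0, hi0A, hi0S⟩ := Finset.exists_of_ssubset hSA
  refine ⟨⟨i0, hi0A, hi0S, fun j hj => hcore i0 hi0A hi0S j hj⟩, ?_⟩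
  intro i hiA hmin hiS
  have h1 := hcore i0 hi0A hi0S i hiS
  have h2 := hmin i0 hi0A
  linarith
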